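/- Let Q, Q′ : ℝ → ℝ be functions of the form Q(g) = sup_{x∈A} inf_{y∈B} [F(x,y) + a(x,y)g] and Q′(g) = sup_{x∈A′} inf_{y∈B} [F(x,y) + a(x,y)g], where A, A′, B are nonempty sets, F and a are real-valued, and sup_{(x,y)∈A×B} a(x,y) < inf_{(x,y)∈A′×B} a(x,y), with all suprema/infima finite. Then the set {g ∈ ℝ : Q(g) = Q′(g)} contains at most one point. -/
import Mathlib


/-- if the slopes on `A × B` are uniformly strictly smaller than the
slopes on `A′ × B`, then the two sup-inf functions `Q`, `Q′` of `g` agree at most at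
one point. -/
theorem sup_inf_affine_agree_at_most_once
    {α β : Type*} (A A' : Set α) (B : Set β)
    (hA : A.Nonempty) (hA' : A'.Nonempty) (hB : B.Nonempty)
    (F a : α → β → ℝ)
    (hbb : ∀ (g : ℝ) (x : α), x ∈ A ∪ A' →
      BddBelow (Set.range fun y : B => F x y.1 + a x y.1 * g))
    (hba : ∀ g : ℝ, BddAbove (Set.range fun x : A => ⨅ y : B, (F x.1 y.1 + a x.1 y.1 * g)))
    (hba' : ∀ g : ℝ, BddAbove (Set.range fun x : A' => ⨅ y : B, (F x.1 y.1 + a x.1 y.1 * g)))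
    (haAbove : BddAbove (Set.range fun p : A × B => a p.1.1 p.2.1))
    (haBelow : BddBelow (Set.range fun p : A' × B => a p.1.1 p.2.1))
    (hsep : (⨆ p : A × B, a p.1.1 p.2.1) < ⨅ p : A' × B, a p.1.1 p.2.1) :
    {g : ℝ | (⨆ x : A, ⨅ y : B, (F x.1 y.1 + a x.1 y.1 * g)) =
             (⨆ x : A', ⨅ y : B, (F x.1 y.1 + a x.1 y.1 * g))}.Subsingleton := by
  haveI := hA.to_subtype
  haveI := hA'.to_subtype
  haveI := hB.to_subtype
  set s := ⨆ p : A × B, a p.1.1 p.2.1 with hs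
  set i := ⨅ p : A' × B, a p.1.1 p.2.1 with hi
  have key : ∀ g g' : ℝ, g < g' →
      (⨆ x : A, ⨅ y : B, (F x.1 y.1 + a x.1 y.1 * g)) =
      (⨆ x : A', ⨅ y : B, (F x.1 y.1 + a x.1 y.1 * g)) →
      (⨆ x : A, ⨅ y : B, (F x.1 y.1 + a x.1 y.1 * g')) <
      (⨆ x : A', ⨅ y : B, (F x.1 y.1 + a x.1 y.1 * g')) := by
    intro g g' hlt heq
    have hc : (0:ℝ) < g' - g := by linarith
    have hQ : (⨆ x : A, ⨅ y : B, (F x.1 y.1 + a x.1 y.1 * g')) ≤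
        (⨆ x : A, ⨅ y : B, (F x.1 y.1 + a x.1 y.1 * g)) + (g' - g) * s := by
      apply ciSup_le
      intro x
      have h1 : (⨅ y : B, (F x.1 y.1 + a x.1 y.1 * g')) - (g' - g) * s ≤
          ⨅ y : B, (F x.1 y.1 + a x.1 y.1 * g) := by
        apply le_ciInf
        intro y
        have h2 : (⨅ y : B, (F x.1 y.1 + a x.1 y.1 * g')) ≤ F x.1 y.1 + a x.1 y.1 * g' :=
          ciInf_le (hbb g' x.1 (Or.inl x.2)) y
        have h3 : a x.1 y.1 ≤ s := le_ciSup haAbove (⟨x, y⟩ : A × B)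
        nlinarith
      have h4 : (⨅ y : B, (F x.1 y.1 + a x.1 y.1 * g)) ≤
          ⨆ x : A, ⨅ y : B, (F x.1 y.1 + a x.1 y.1 * g) := le_ciSup (hba g) x
      linarith
    have hQ' : (⨆ x : A', ⨅ y : B, (F x.1 y.1 + a x.1 y.1 * g)) + (g' - g) * i ≤
        ⨆ x : A', ⨅ y : B, (F x.1 y.1 + a x.1 y.1 * g') := by
      have h5 : (⨆ x : A', ⨅ y : B, (F x.1 y.1 + a x.1 y.1 * g)) ≤
          (⨆ x : A', ⨅ y : B, (F x.1 y.1 + a x.1 y.1 * g')) - (g' - g) * i := by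
        apply ciSup_le
        intro x
        have h6 : (⨅ y : B, (F x.1 y.1 + a x.1 y.1 * g)) + (g' - g) * i ≤
            ⨅ y : B, (F x.1 y.1 + a x.1 y.1 * g') := by
          apply le_ciInf
          intro y
          have h7 : (⨅ y : B, (F x.1 y.1 + a x.1 y.1 * g)) ≤ F x.1 y.1 + a x.1 y.1 * g :=
            ciInf_le (hbb g x.1 (Or.inr x.2)) y
          have h8 : i ≤ a x.1 y.1 := ciInf_le haBelow (⟨x, y⟩ : A' × B)
          nlinarith
        have h9 : (⨅ y : B, (F x.1 y.1 + a x.1 y.1 * g')) ≤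
            ⨆ x : A', ⨅ y : B, (F x.1 y.1 + a x.1 y.1 * g') := le_ciSup (hba' g') x
        linarith
      linarith
    have hsi : (g' - g) * s < (g' - g) * i := by
      exact mul_lt_mul_of_pos_left hsep hc
    calc (⨆ x : A, ⨅ y : B, (F x.1 y.1 + a x.1 y.1 * g'))
        ≤ (⨆ x : A, ⨅ y : B, (F x.1 y.1 + a x.1 y.1 * g)) + (g' - g) * s := hQ
      _ < (⨆ x : A', ⨅ y : B, (F x.1 y.1 + a x.1 y.1 * g)) + (g' - g) * i := by
          rw [heq]; linarith
      _ ≤ ⨆ x : A', ⨅ y : B, (F x.1 y.1 + a x.1 y.1 * g') := hQ'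
  intro g1 hg1 g2 hg2
  by_contra hne
  rcases lt_or_gt_of_ne hne with h | h
  · exact absurd hg2 (ne_of_lt (key g1 g2 h hg1))
  · exact absurd hg1 (ne_of_lt (key g2 g1 h hg2))
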